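/- Let n ≥ 1, let d₁, …, dₙ ≥ 1, and let R be a Hermitian operator on ℂ^{d₁} ⊗ ⋯ ⊗ ℂ^{dₙ} with trace 1. Then there exist finitely many families of unit vectors u_{j,i} ∈ ℂ^{d_i} and real numbers p_j with Σ_j p_j = 1 such that R = Σ_j p_j (|u_{j,1}⟩⟨u_{j,1}| ⊗ ⋯ ⊗ |u_{j,n}⟩⟨u_{j,n}|). -/

import Mathlib

open Matrix Complex

noncomputable def vv {d : ℕ} (a b : Fin d) : Fin 4 → Fin d → ℂ := fun s t =>
  if a = b then (if t = a then 1 else 0)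
  else
    if s = 0 then (if t = a then 1 else 0)
    else if s = 1 then (if t = b then 1 else 0)
    else if s = 2 then
      (if t = a then ((Real.sqrt 2)⁻¹ : ℂ) else if t = b then ((Real.sqrt 2)⁻¹ : ℂ) else 0)
    else
      (if t = a then ((Real.sqrt 2)⁻¹ : ℂ) else if t = b then Complex.I * ((Real.sqrt 2)⁻¹ : ℂ) else 0)

noncomputable def cc {d : ℕ} (a b : Fin d) : Fin 4 → ℂ := fun s =>
  if a = b then (if s = 0 then 1 else 0)
  else if s = 0 then -(1 + Complex.I)/2
  else if s = 1 then -(1 + Complex.I)/2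
  else if s = 2 then 1
  else Complex.I

lemma sqrt2C : ((Real.sqrt 2 : ℝ) : ℂ) * ((Real.sqrt 2 : ℝ) : ℂ) = 2 := by
  norm_cast
  exact Real.mul_self_sqrt (by norm_num)

lemma sqrt2C_sq : ((Real.sqrt 2 : ℝ) : ℂ) ^ 2 = 2 := by rw [sq]; exact sqrt2C

lemma sqrt2C_ne : ((Real.sqrt 2 : ℝ) : ℂ) ≠ 0 := by
  simp [Real.sqrt_eq_zero']

lemma sqrt2C_inv : ((Real.sqrt 2 : ℝ) : ℂ)⁻¹ = ((Real.sqrt 2 : ℝ) : ℂ) / 2 := by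
  rw [eq_div_iff (two_ne_zero), inv_mul_eq_div, div_eq_iff sqrt2C_ne, sqrt2C]

lemma I_three : Complex.I ^ 3 = -Complex.I := by
  simp [pow_succ, Complex.I_mul_I]

lemma vv_unit {d : ℕ} (a b : Fin d) (s : Fin 4) : ∑ t, ‖vv a b s t‖ ^ 2 = 1 := by
  have h2 : ‖((Real.sqrt 2 : ℝ) : ℂ)⁻¹‖ ^ 2 = 2⁻¹ := by
    rw [norm_inv, inv_pow, Complex.norm_real, Real.norm_eq_abs, _root_.sq_abs,
      Real.sq_sqrt (by norm_num : (0:ℝ) ≤ 2)]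
  by_cases hab : a = b
  · simp [vv, hab, apply_ite (‖·‖), Finset.sum_ite_eq']
  · have hba : ¬ b = a := fun h => hab h.symm
    have split : ∀ (x y : ℂ), ∑ t, ‖(if t = a then x else if t = b then y else 0)‖ ^ 2
        = ‖x‖ ^ 2 + ‖y‖ ^ 2 := by
      intro x y
      have e : ∀ t : Fin d, ‖(if t = a then x else if t = b then y else 0)‖ ^ 2
          = (if t = a then ‖x‖ ^ 2 else 0) + (if t = b then ‖y‖ ^ 2 else 0) := by
        intro t
        by_cases ht : t = a
        · simp [ht, hab]
        · by_cases ht' : t = b <;> simp [ht, ht', hba]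
      simp only [e]
      rw [Finset.sum_add_distrib, Finset.sum_ite_eq', Finset.sum_ite_eq']
      simp
    by_cases hs0 : s = 0
    · simp [vv, hab, hs0, apply_ite (‖·‖), Finset.sum_ite_eq']
    by_cases hs1 : s = 1
    · simp [vv, hab, hs0, hs1, apply_ite (‖·‖), Finset.sum_ite_eq']
    by_cases hs2 : s = 2
    · simp only [vv, if_neg hab, if_neg hs0, if_neg hs1, if_pos hs2]
      rw [split, h2]; norm_num
    · simp only [vv, if_neg hab, if_neg hs0, if_neg hs1, if_neg hs2]
      rw [split, norm_mul, Complex.norm_I, one_mul, h2]; norm_num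

lemma key {d : ℕ} (a b : Fin d) (x y : Fin d) :
    ∑ s, cc a b s * (vv a b s x * (starRingEnd ℂ) (vv a b s y))
      = (if x = a then 1 else 0) * (if y = b then 1 else 0) := by
  by_cases hab : a = b
  · subst hab
    simp [cc, vv, Fin.sum_univ_four, apply_ite (starRingEnd ℂ)]
  · rw [Fin.sum_univ_four]
    simp only [cc, vv, hab, if_false, if_true]
    norm_num
    by_cases hxa : x = a <;> by_cases hya : y = a <;>
      by_cases hxb : x = b <;> by_cases hyb : y = b <;>
      simp_all [map_inv₀, Complex.conj_ofReal, sqrt2C_inv] <;>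
      (try simp [sqrt2C_sq, map_ofNat, pow_succ, Complex.I_mul_I]) <;> (try ring_nf) <;> (try simp [sqrt2C_sq, I_three, pow_succ, Complex.I_mul_I]) <;> (try ring_nf) <;> (try norm_num)

set_option maxHeartbeats 1000000 in
/-- corollary of the quasi-probability separable expansion:
every Hermitian trace-one operator on `ℂ^{d₁} ⊗ ⋯ ⊗ ℂ^{dₙ}` is a
quasi-probabilistic mixture of pure space-time product states. -/
theorem herm1_quasiProb_product_expansion
    (n : ℕ) (hn : 1 ≤ n) (d : Fin n → ℕ) (hd : ∀ i, 1 ≤ d i)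
    (R : Matrix (∀ i, Fin (d i)) (∀ i, Fin (d i)) ℂ)
    (hHerm : R.IsHermitian) (hTr : R.trace = 1) :
    ∃ (k : ℕ) (u : Fin k → ∀ i, Fin (d i) → ℂ) (p : Fin k → ℝ),
      (∀ j i, ∑ t, ‖u j i t‖ ^ 2 = 1) ∧
      (∑ j, p j = 1) ∧
      R = ∑ j, (p j : ℂ) •
          Matrix.of (fun f g : ∀ i, Fin (d i) =>
            ∏ i, u j i (f i) * star (u j i (g i))) := by
  classical
  let J := ((∀ i, Fin (d i)) × (∀ i, Fin (d i))) × (∀ _ : Fin n, Fin 4)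
  let q : J → ℂ := fun j => R j.1.1 j.1.2 * ∏ i, cc (j.1.1 i) (j.1.2 i) (j.2 i)
  let M : J → Matrix (∀ i, Fin (d i)) (∀ i, Fin (d i)) ℂ := fun j =>
    Matrix.of fun x y : ∀ i, Fin (d i) =>
      ∏ i, vv (j.1.1 i) (j.1.2 i) (j.2 i) (x i) *
        (starRingEnd ℂ) (vv (j.1.1 i) (j.1.2 i) (j.2 i) (y i))
  -- Step 1: complex expansion
  have hexpC : R = ∑ j : J, q j • M j := by
    ext x y
    rw [Matrix.sum_apply]
    simp only [Matrix.smul_apply, Matrix.of_apply, smul_eq_mul, q, M]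
    rw [Fintype.sum_prod_type, Fintype.sum_prod_type]
    have inner : ∀ f g : ∀ i, Fin (d i),
        (∑ σ : ∀ _ : Fin n, Fin 4,
          (R f g * ∏ i, cc (f i) (g i) (σ i)) *
            ∏ i, vv (f i) (g i) (σ i) (x i) * (starRingEnd ℂ) (vv (f i) (g i) (σ i) (y i)))
        = if x = f then (if y = g then R f g else 0) else 0 := by
      intro f g
      have e1 : (∑ σ : ∀ _ : Fin n, Fin 4,
          (R f g * ∏ i, cc (f i) (g i) (σ i)) *
            ∏ i, vv (f i) (g i) (σ i) (x i) * (starRingEnd ℂ) (vv (f i) (g i) (σ i) (y i)))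
          = R f g * ∑ σ : ∀ _ : Fin n, Fin 4,
              ∏ i, cc (f i) (g i) (σ i) *
                (vv (f i) (g i) (σ i) (x i) * (starRingEnd ℂ) (vv (f i) (g i) (σ i) (y i))) := by
        rw [Finset.mul_sum]
        refine Finset.sum_congr rfl fun σ _ => ?_
        rw [mul_assoc, ← Finset.prod_mul_distrib]
      rw [e1, show (∑ σ : ∀ _ : Fin n, Fin 4,
          ∏ i, cc (f i) (g i) (σ i) *
            (vv (f i) (g i) (σ i) (x i) * (starRingEnd ℂ) (vv (f i) (g i) (σ i) (y i))))
          = ∏ i, ∑ s : Fin 4, cc (f i) (g i) s *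
            (vv (f i) (g i) s (x i) * (starRingEnd ℂ) (vv (f i) (g i) s (y i)))
          from (Fintype.prod_sum (fun i s => cc (f i) (g i) s *
            (vv (f i) (g i) s (x i) * (starRingEnd ℂ) (vv (f i) (g i) s (y i))))).symm]
      have e2 : ∀ i : Fin n,
          (∑ s : Fin 4, cc (f i) (g i) s *
            (vv (f i) (g i) s (x i) * (starRingEnd ℂ) (vv (f i) (g i) s (y i))))
          = (if x i = f i then 1 else 0) * (if y i = g i then 1 else 0) :=
        fun i => key (f i) (g i) (x i) (y i)
      simp only [e2]
      rw [Finset.prod_mul_distrib, Fintype.prod_boole, Fintype.prod_boole]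
      have hx : (∀ i, x i = f i) ↔ x = f := funext_iff.symm
      have hy : (∀ i, y i = g i) ↔ y = g := funext_iff.symm
      simp only [hx, hy]
      split_ifs <;> ring
    simp only [inner]
    simp [Finset.sum_ite_eq]
  -- Step 2: each M j is Hermitian
  have hM : ∀ j : J, (M j)ᴴ = M j := by
    intro j
    ext x y
    simp only [Matrix.conjTranspose_apply, Matrix.of_apply, M, Complex.star_def,
      map_prod, _root_.map_mul, Complex.conj_conj]
    exact Finset.prod_congr rfl fun i _ => mul_comm _ _
  -- Step 3: real coefficients
  have hexpR : R = ∑ j : J, ((q j).re : ℂ) • M j := by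
    have hconj : R = ∑ j : J, ((starRingEnd ℂ) (q j)) • M j := by
      conv_lhs => rw [← hHerm, hexpC]
      rw [Matrix.conjTranspose_sum]
      refine Finset.sum_congr rfl fun j _ => ?_
      rw [Matrix.conjTranspose_smul, hM j]; rfl
    have hsplit : ∀ j : J, ((q j).re : ℂ) • M j
        = (2⁻¹ : ℂ) • (q j • M j + ((starRingEnd ℂ) (q j)) • M j) := by
      intro j
      rw [← add_smul, smul_smul]
      congr 1
      rw [Complex.add_conj]
      simp only [Complex.ofReal_mul, Complex.ofReal_ofNat]
      ring
    rw [Finset.sum_congr rfl fun j _ => hsplit j, ← Finset.smul_sum,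
      Finset.sum_add_distrib, ← hexpC, ← hconj, ← two_smul ℂ R, smul_smul]
    norm_num
  -- trace of M j is 1
  have htrM : ∀ j : J, (M j).trace = 1 := by
    intro j
    rw [Matrix.trace]
    simp only [Matrix.diag_apply, Matrix.of_apply, M]
    rw [show (∑ x : ∀ i, Fin (d i),
        ∏ i, vv (j.1.1 i) (j.1.2 i) (j.2 i) (x i) *
          (starRingEnd ℂ) (vv (j.1.1 i) (j.1.2 i) (j.2 i) (x i)))
        = ∏ i, ∑ t, vv (j.1.1 i) (j.1.2 i) (j.2 i) t *
          (starRingEnd ℂ) (vv (j.1.1 i) (j.1.2 i) (j.2 i) t)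
        from (Fintype.prod_sum (fun i t => vv (j.1.1 i) (j.1.2 i) (j.2 i) t *
          (starRingEnd ℂ) (vv (j.1.1 i) (j.1.2 i) (j.2 i) t))).symm]
    have h1 : ∀ i : Fin n,
        (∑ t, vv (j.1.1 i) (j.1.2 i) (j.2 i) t *
          (starRingEnd ℂ) (vv (j.1.1 i) (j.1.2 i) (j.2 i) t)) = 1 := by
      intro i
      have h2 : ∀ t, vv (j.1.1 i) (j.1.2 i) (j.2 i) t *
          (starRingEnd ℂ) (vv (j.1.1 i) (j.1.2 i) (j.2 i) t)
          = ((‖vv (j.1.1 i) (j.1.2 i) (j.2 i) t‖ ^ 2 : ℝ) : ℂ) := by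
        intro t
        rw [Complex.mul_conj, Complex.normSq_eq_norm_sq]
      rw [Finset.sum_congr rfl fun t _ => h2 t, ← Complex.ofReal_sum,
        vv_unit (j.1.1 i) (j.1.2 i) (j.2 i), Complex.ofReal_one]
    simp [h1]
  -- sum of real coefficients is 1
  have hsum1 : ∑ j : J, (q j).re = 1 := by
    have h1 : (1 : ℂ) = ∑ j : J, ((q j).re : ℂ) := by
      calc (1 : ℂ) = R.trace := hTr.symm
        _ = (∑ j : J, ((q j).re : ℂ) • M j).trace := by rw [← hexpR]
        _ = ∑ j : J, ((q j).re : ℂ) • (M j).trace := by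
            rw [Matrix.trace_sum]
            exact Finset.sum_congr rfl fun j _ => Matrix.trace_smul _ _
        _ = ∑ j : J, ((q j).re : ℂ) := by
            refine Finset.sum_congr rfl fun j _ => ?_
            rw [htrM j, smul_eq_mul, mul_one]
    have h2 : ((∑ j : J, (q j).re : ℝ) : ℂ) = 1 := by
      push_cast
      exact h1.symm
    exact_mod_cast h2
  -- enumerate J
  let e := (Fintype.equivFin J).symm
  refine ⟨Fintype.card J,
    fun j i => vv ((e j).1.1 i) ((e j).1.2 i) ((e j).2 i),
    fun j => (q (e j)).re, fun j i => vv_unit _ _ _, ?_, ?_⟩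
  · rw [Equiv.sum_comp e fun j => (q j).re]
    exact hsum1
  · exact hexpR.trans (Equiv.sum_comp e fun j => ((q j).re : ℂ) • M j).symm
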